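/- Let p ≡ 5 (mod 8) be a prime, let χ be a quartic Dirichlet character modulo p, let ψ = χ² be the quadratic character modulo p, and let B be a rational number. Define σ̃_p(0) = −B/4. If there exist complex numbers α' and β' such that ∑_{j=0}^{n} δ_χ(j)·δ_χ(n−j) = α'·σ̃_p(n) + β'·σ̂_p(n) for all integers n ≥ 0, then B = 4/5 or B = 4. -/

import Mathlib

open Finset

/-- `δ_χ(n) = ∑_{0<d∣n} χ(d)` for `n ≥ 1`, and
`δ_χ(0) = −(1/(2N)) ∑_{a=1}^{N−1} χ(a)·a`. -/
noncomputable def deltaChar {N : ℕ} (χ : DirichletCharacter ℂ N) (n : ℕ) : ℂ :=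
  if n = 0 then -(1 / (2 * (N : ℂ))) * ∑ a ∈ Finset.range N, χ a * a
  else ∑ d ∈ n.divisors, χ d

/-- `σ̃_p(n) = ∑_{0<d∣n} ψ(d)·d` for `n ≥ 1`, with prescribed value `c` at `n = 0`. -/
noncomputable def sigmaTilde {N : ℕ} (ψ : DirichletCharacter ℂ N) (c : ℂ) (n : ℕ) : ℂ :=
  if n = 0 then c else ∑ d ∈ n.divisors, ψ d * d

/-- `σ̂_p(n) = ∑_{0<d∣n} ψ(d)·(n/d)` for `n ≥ 1`, and `σ̂_p(0) = 0`. -/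
noncomputable def sigmaHat {N : ℕ} (ψ : DirichletCharacter ℂ N) (n : ℕ) : ℂ :=
  if n = 0 then 0 else ∑ d ∈ n.divisors, ψ d * ((n / d : ℕ) : ℂ)

theorem farkas_quartic_only_if_second (p : ℕ) (hp : p.Prime) (hp8 : p % 8 = 5)
    (χ : DirichletCharacter ℂ p) (hχ : orderOf χ = 4) (B : ℚ)
    (h : ∃ α' β' : ℂ, ∀ n : ℕ,
      ∑ j ∈ Finset.range (n + 1), deltaChar χ j * deltaChar χ (n - j)
        = α' * sigmaTilde (χ ^ 2) (-(B : ℂ) / 4) n + β' * sigmaHat (χ ^ 2) n) :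
    B = 4 / 5 ∨ B = 4 := by
  haveI : Fact p.Prime := ⟨hp⟩
  have hp2 : p ≠ 2 := by omega
  have h2ne : (2 : ZMod p) ≠ 0 := by
    intro h0
    have hd : p ∣ 2 := (ZMod.natCast_eq_zero_iff 2 p).mp (by exact_mod_cast h0)
    have := Nat.le_of_dvd (by norm_num) hd
    omega
  have h3ne : (3 : ZMod p) ≠ 0 := by
    intro h0
    have hd : p ∣ 3 := (ZMod.natCast_eq_zero_iff 3 p).mp (by exact_mod_cast h0)
    have := Nat.le_of_dvd (by norm_num) hd
    omega
  have hχ4 : χ ^ 4 = 1 := by rw [← hχ]; exact pow_orderOf_eq_one χ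
  obtain ⟨a, b, h⟩ := h
  set s := deltaChar χ 0 with hs
  set e := χ (2 : ZMod p) with he
  set c := χ (3 : ZMod p) with hcdef
  -- ψ(2) = -1, i.e. e^2 = -1
  have hε : e ^ 2 = -1 := by
    set ψ := χ ^ 2 with hψdef
    have hψsq : ψ ^ 2 = 1 := by rw [hψdef, ← pow_mul]; exact hχ4
    have hψne : ψ ≠ 1 := by
      intro hh
      have h2 : orderOf χ ∣ 2 := orderOf_dvd_of_pow_eq_one hh
      rw [hχ] at h2; norm_num at h2
    obtain ⟨g, hg⟩ := IsCyclic.exists_generator (α := (ZMod p)ˣ)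
    have hgm1 : ψ (g : ZMod p) = -1 := by
      have hsq : ψ (g : ZMod p) * ψ (g : ZMod p) = 1 := by
        have h1 := MulChar.pow_apply_coe ψ 2 g
        rw [hψsq, MulChar.one_apply_coe] at h1
        rw [← sq]; exact h1.symm
      rcases mul_self_eq_one_iff.mp hsq with h1 | h1
      · exfalso; apply hψne; apply MulChar.ext; intro x
        obtain ⟨k, hk⟩ := (isOfFinOrder_of_finite g).mem_powers_iff_mem_zpowers.mpr (hg x)
        rw [MulChar.one_apply_coe, ← hk, Units.val_pow_eq_pow_val, map_pow, h1, one_pow]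
      · exact h1
    have hu2 : IsUnit (2 : ZMod p) := isUnit_iff_ne_zero.mpr h2ne
    obtain ⟨k, hk⟩ := (isOfFinOrder_of_finite g).mem_powers_iff_mem_zpowers.mpr (hg hu2.unit)
    have h2g : (2 : ZMod p) = (g : ZMod p) ^ k := by
      rw [← hu2.unit_spec, ← hk, Units.val_pow_eq_pow_val]
    have hnotsq : ¬ IsSquare (2 : ZMod p) := by
      intro hsq
      rcases (ZMod.exists_sq_eq_two_iff hp2).mp hsq with h' | h' <;> omega
    have hψ2val : ψ (2 : ZMod p) = (-1) ^ k := by rw [h2g, map_pow, hgm1]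
    have hkodd : Odd k := by
      rw [← Nat.not_even_iff_odd]
      intro hev
      obtain ⟨m, hm⟩ := hev
      exact hnotsq ⟨(g : ZMod p) ^ m, by rw [h2g, hm, pow_add]⟩
    have hψ2 : ψ (2 : ZMod p) = -1 := by rw [hψ2val, hkodd.neg_one_pow]
    rw [hψdef, sq χ, MulChar.mul_apply] at hψ2
    rw [sq]
    exact hψ2
  -- c^4 = 1
  have hc4 : c ^ 4 = 1 := by
    have hu3 : IsUnit (3 : ZMod p) := isUnit_iff_ne_zero.mpr h3ne
    have h1 := MulChar.pow_apply' χ (by norm_num : (4:ℕ) ≠ 0) (3 : ZMod p)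
    rw [hχ4, MulChar.one_apply hu3] at h1
    exact h1.symm
  -- value computations
  have hψmul : ((χ ^ 2 : DirichletCharacter ℂ p)) = χ * χ := sq χ
  have h4c : ((4:ℕ) : ZMod p) = 2 * 2 := by push_cast; ring
  have hd1 : deltaChar χ 1 = 1 := by
    rw [deltaChar, if_neg (by norm_num), show (1:ℕ).divisors = {1} from by decide,
      Finset.sum_singleton]
    norm_num
  have hd2 : deltaChar χ 2 = 1 + e := by
    rw [deltaChar, if_neg (by norm_num), show (2:ℕ).divisors = {1, 2} from by decide,
      Finset.sum_insert (by decide), Finset.sum_singleton]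
    norm_num
    rw [he]
  have hd3 : deltaChar χ 3 = 1 + c := by
    rw [deltaChar, if_neg (by norm_num), show (3:ℕ).divisors = {1, 3} from by decide,
      Finset.sum_insert (by decide), Finset.sum_singleton]
    norm_num
    rw [hcdef]
  have hd4 : deltaChar χ 4 = 1 + e + e * e := by
    rw [deltaChar, if_neg (by norm_num), show (4:ℕ).divisors = {1, 2, 4} from by decide,
      Finset.sum_insert (by decide), Finset.sum_insert (by decide), Finset.sum_singleton]
    rw [h4c, map_mul]
    norm_num
    ring
  have hT0 : sigmaTilde (χ ^ 2) (-(B : ℂ) / 4) 0 = -(B : ℂ) / 4 := by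
    rw [sigmaTilde, if_pos rfl]
  have hH0 : sigmaHat (χ ^ 2) 0 = 0 := by rw [sigmaHat, if_pos rfl]
  have hT1 : sigmaTilde (χ ^ 2) (-(B : ℂ) / 4) 1 = 1 := by
    rw [sigmaTilde, if_neg (by norm_num), show (1:ℕ).divisors = {1} from by decide,
      Finset.sum_singleton, hψmul]
    simp [MulChar.mul_apply]
  have hH1 : sigmaHat (χ ^ 2) 1 = 1 := by
    rw [sigmaHat, if_neg (by norm_num), show (1:ℕ).divisors = {1} from by decide,
      Finset.sum_singleton, hψmul]
    simp [MulChar.mul_apply]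
  have hT2 : sigmaTilde (χ ^ 2) (-(B : ℂ) / 4) 2 = 1 + (e * e) * 2 := by
    rw [sigmaTilde, if_neg (by norm_num), show (2:ℕ).divisors = {1, 2} from by decide,
      Finset.sum_insert (by decide), Finset.sum_singleton, hψmul]
    simp only [MulChar.mul_apply]
    norm_num
    rw [he]
  have hH2 : sigmaHat (χ ^ 2) 2 = 2 + (e * e) * 1 := by
    rw [sigmaHat, if_neg (by norm_num), show (2:ℕ).divisors = {1, 2} from by decide,
      Finset.sum_insert (by decide), Finset.sum_singleton, hψmul]
    simp only [MulChar.mul_apply]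
    norm_num
    rw [he]
  have hT3 : sigmaTilde (χ ^ 2) (-(B : ℂ) / 4) 3 = 1 + (c * c) * 3 := by
    rw [sigmaTilde, if_neg (by norm_num), show (3:ℕ).divisors = {1, 3} from by decide,
      Finset.sum_insert (by decide), Finset.sum_singleton, hψmul]
    simp only [MulChar.mul_apply]
    norm_num
    rw [hcdef]
  have hH3 : sigmaHat (χ ^ 2) 3 = 3 + (c * c) * 1 := by
    rw [sigmaHat, if_neg (by norm_num), show (3:ℕ).divisors = {1, 3} from by decide,
      Finset.sum_insert (by decide), Finset.sum_singleton, hψmul]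
    simp only [MulChar.mul_apply]
    norm_num
    rw [hcdef]
  have hT4 : sigmaTilde (χ ^ 2) (-(B : ℂ) / 4) 4 = 1 + (e * e) * 2 + ((e * e) * (e * e)) * 4 := by
    rw [sigmaTilde, if_neg (by norm_num), show (4:ℕ).divisors = {1, 2, 4} from by decide,
      Finset.sum_insert (by decide), Finset.sum_insert (by decide), Finset.sum_singleton, hψmul]
    simp only [MulChar.mul_apply]
    rw [h4c, map_mul]
    norm_num
    ring
  have hH4 : sigmaHat (χ ^ 2) 4 = 4 + (e * e) * 2 + ((e * e) * (e * e)) * 1 := by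
    rw [sigmaHat, if_neg (by norm_num), show (4:ℕ).divisors = {1, 2, 4} from by decide,
      Finset.sum_insert (by decide), Finset.sum_insert (by decide), Finset.sum_singleton, hψmul]
    simp only [MulChar.mul_apply]
    rw [h4c, map_mul]
    norm_num
    ring
  -- instantiate the hypothesis
  have hI0 := h 0
  have hI1 := h 1
  have hI2 := h 2
  have hI3 := h 3
  have hI4 := h 4
  simp only [Finset.sum_range_succ, Finset.sum_range_zero, zero_add] at hI0 hI1 hI2 hI3 hI4
  norm_num at hI0 hI1 hI2 hI3 hI4
  rw [hT0, hH0] at hI0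
  rw [hd1, hT1, hH1] at hI1
  rw [hd1, hd2, hT2, hH2] at hI2
  rw [hd1, hd2, hd3, hT3, hH3] at hI3
  rw [hd1, hd2, hd3, hd4, hT4, hH4] at hI4
  -- canonical equations
  have hE0 : s * s = a * (-(B : ℂ) / 4) := by linear_combination hI0
  have hE1 : 2 * s = a + b := by linear_combination hI1
  have hE2 : 2 * s * (1 + e) + 1 = a * (1 + 2 * e ^ 2) + b * (2 + e ^ 2) := by
    linear_combination hI2
  have hE3 : 2 * s * (1 + c) + 2 * (1 + e) = a * (1 + 3 * c ^ 2) + b * (3 + c ^ 2) := by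
    linear_combination hI3
  have hE4 : 2 * s * (1 + e + e ^ 2) + 2 * (1 + c) + (1 + e) ^ 2
      = a * (1 + 2 * e ^ 2 + 4 * e ^ 4) + b * (4 + 2 * e ^ 2 + e ^ 4) := by
    linear_combination hI4
  -- algebra
  have ha : a = -(s * e) - 1 / 2 := by
    linear_combination (-1/2 : ℂ) * hE1 + (1/2 : ℂ) * hE2 + (a + b / 2) * hε
  have hb : b = 2 * s + s * e + 1 / 2 := by
    linear_combination -hE1 - ha
  have hc : c = 3 * s - s * e - e - 1 := by
    linear_combination (1/2 : ℂ) * hE4 - (3/2 : ℂ) * hE1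
      + (-s + 2 * e * e * a + (1/2) * e * e * b - a + (1/2) * b - 1/2) * hε
  have hK : 28 * s * s * s * e - 4 * s * s * s - 16 * s * s * e + 38 * s * s
      - 12 * s * e - 18 * s + 4 * e + 1 = 0 := by
    linear_combination hE3 - (-3 * c * c - 1) * ha - (-(c * c) - 3) * hb
      - (-2 * s * s * e * e + 8 * s * s * e - 6 * s * s - 2 * s * e * e + 2 * s * e * c
         - s * e - 2 * s * c + 7 * s - e + c - 1) * hc
      - (2 * s * s * s * e - 14 * s * s * s + 4 * s * s * e - 11 * s * s + 2 * s * e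
         + 4 * s + 1) * hε
  have hQ : -96 * s * s * s * s * e + 28 * s * s * s * s + 32 * s * s * s * e
      - 176 * s * s * s + 96 * s * s * e + 72 * s * s - 32 * s * e + 16 * s - 5 = 0 := by
    linear_combination hc4
      - (-(s * s * s * e * e * e) + 9 * s * s * s * e * e - 27 * s * s * s * e + 27 * s * s * s
        - 3 * s * s * e * e * e + s * s * e * e * c + 15 * s * s * e * e - 6 * s * s * e * c
        - 9 * s * s * e + 9 * s * s * c - 27 * s * s - 3 * s * e * e * e + 2 * s * e * e * c
        + 3 * s * e * e - s * e * c * c - 4 * s * e * c + 15 * s * e + 3 * s * c * c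
        - 6 * s * c + 9 * s - e * e * e + e * e * c - 3 * e * e - e * c * c + 2 * e * c
        - 3 * e + c * c * c - c * c + c - 1) * hc
      - (s * s * s * s * e * e - 12 * s * s * s * s * e + 53 * s * s * s * s
        + 4 * s * s * s * e * e - 32 * s * s * s * e + 68 * s * s * s + 6 * s * s * e * e
        - 24 * s * s * e - 18 * s * s + 4 * s * e * e - 28 * s + e * e + 4 * e + 5) * hε
  have hfac : (2 * s - 1 - e) * (10 * s - 3 - e) = 0 := by
    linear_combination (4 * s * e - 12 * s + 4 * e + 2) * hK
      + ((8/5 : ℂ) * e - 16/5) * hQ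
      + ((208/5 : ℂ) * s * s * s * s - (496/5) * s * s * s - (208/5) * s * s
         + (416/5) * s - 15) * hε
  have hB : 8 * s ^ 2 = (B : ℂ) * (2 * s * e + 1) := by
    linear_combination (8 : ℂ) * hE0 - 2 * (B : ℂ) * ha
  rcases mul_eq_zero.mp hfac with h1 | h2
  · -- case B = 4
    right
    have hBe : (B : ℂ) * e = 4 * e := by
      linear_combination -hB + (4 * s - e * (B : ℂ) + 2 * e + 2) * h1 + (-(B : ℂ) + 2) * hε
    have he0 : e ≠ 0 := by
      intro h0
      rw [h0] at hε
      norm_num at hε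
    have : (B : ℂ) = 4 := mul_right_cancel₀ he0 hBe
    exact_mod_cast this
  · -- case B = 4/5
    left
    have hBe : (20 * (B : ℂ) - 16) * (4 + 3 * e) = 0 := by
      linear_combination -100 * hB + (80 * s - 20 * e * (B : ℂ) + 8 * e + 24) * h2
        + (-20 * (B : ℂ) + 8) * hε
    have he43 : (4 + 3 * e : ℂ) ≠ 0 := by
      intro h0
      have hcontra : (-25 : ℂ) = 0 := by linear_combination (3 * e - 4) * h0 - 9 * hε
      norm_num at hcontra
    have h5 : 20 * (B : ℂ) - 16 = 0 := by
      rcases mul_eq_zero.mp hBe with hx | hx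
      · exact hx
      · exact absurd hx he43
    have h5' : (5 : ℂ) * (B : ℂ) = 4 := by linear_combination (1/4 : ℂ) * h5
    have h5q : (5 : ℚ) * B = 4 := by exact_mod_cast h5'
    linarith
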